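/- Refined Pinsker's inequality for general distributions: let P and Q be probability measures on a common measurable space (Ω, F) with KL(P,Q) finite. Then for every event A ∈ F with Q(A) ∈ (0,1), |P(A) − Q(A)| ≤ sqrt( KL(P,Q) / φ(Q(A)) ), where φ(q) = log((1−q)/q)/(1 − 2q) for q ≠ 1/2 and φ(1/2) = 2. -/

import Mathlib

open MeasureTheory
open scoped ENNReal Classical

/-- The Kullback-Leibler divergence between two measures, with value `+∞`
when `P` is not absolutely continuous w.r.t. `Q` or when the log-likelihood
ratio is not integrable. -/
noncomputable def KLdiv {Ω : Type*} [MeasurableSpace Ω] (P Q : Measure Ω) : ℝ≥0∞ :=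
  if P ≪ Q ∧ Integrable (fun ω => Real.log (P.rnDeriv Q ω).toReal) P
  then ENNReal.ofReal (∫ ω, Real.log (P.rnDeriv Q ω).toReal ∂P)
  else ⊤

/-- The optimal factor in the refined Pinsker inequality of
Ordentlich and Weinberger: `φ(q) = log((1−q)/q)/(1−2q)`, extended by
continuity as `φ(1/2) = 2`. -/
noncomputable def pinskerPhi (q : ℝ) : ℝ :=
  if q = 1 / 2 then 2 else Real.log ((1 - q) / q) / (1 - 2 * q)


/-- `x * (log x - log q)`, the building block of binary KL. -/
noncomputable def klBin (p q : ℝ) : ℝ :=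
  p * Real.log p - p * Real.log q + (1 - p) * Real.log (1 - p) - (1 - p) * Real.log (1 - q)

lemma aux_log_lb {t : ℝ} (ht0 : 0 ≤ t) (ht1 : t < 1) :
    2 * t ≤ Real.log (1 + t) - Real.log (1 - t) := by
  set g : ℝ → ℝ := fun t => Real.log (1 + t) - Real.log (1 - t) - 2 * t with hg
  have hd : ∀ x ∈ Set.Ioo (0:ℝ) 1, HasDerivAt g (1/(1+x) + 1/(1-x) - 2) x := by
    intro x hx
    have h1 : (1:ℝ) + x ≠ 0 := by nlinarith [hx.1, hx.2]
    have h2 : (1:ℝ) - x ≠ 0 := by nlinarith [hx.1, hx.2]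
    have d1 : HasDerivAt (fun y : ℝ => Real.log (1 + y)) (1/(1+x)) x := by
      have := ((hasDerivAt_id x).const_add 1).log h1
      simpa [one_div, neg_div] using this
    have d2 : HasDerivAt (fun y : ℝ => Real.log (1 - y)) (-(1/(1-x))) x := by
      have h := ((hasDerivAt_id x).const_sub 1).log h2
      refine h.congr_deriv ?_
      simp [neg_div]
    have d3 : HasDerivAt (fun y : ℝ => 2 * y) 2 x := by
      simpa using (hasDerivAt_id x).const_mul 2
    have := (d1.sub d2).sub d3
    refine this.congr_deriv ?_
    ring
  have hcont : ContinuousOn g (Set.Ico 0 1) := by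
    apply ContinuousOn.sub (ContinuousOn.sub ?_ ?_) (by fun_prop)
    · apply ContinuousOn.log (by fun_prop)
      intro x hx; nlinarith [hx.1, hx.2]
    · apply ContinuousOn.log (by fun_prop)
      intro x hx; nlinarith [hx.1, hx.2]
  have hmono : MonotoneOn g (Set.Ico 0 1) := by
    apply monotoneOn_of_deriv_nonneg (convex_Ico 0 1) hcont
    · intro x hx
      rw [interior_Ico] at hx
      exact ((hd x hx).differentiableAt).differentiableWithinAt
    · intro x hx
      rw [interior_Ico] at hx
      rw [(hd x hx).deriv]
      have h1 : (0:ℝ) < 1 + x := by linarith [hx.1]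
      have h2 : (0:ℝ) < 1 - x := by linarith [hx.2]
      have hden : (0:ℝ) < (1+x)*(1-x) := mul_pos h1 h2
      rw [div_add_div _ _ (ne_of_gt h1) (ne_of_gt h2), sub_nonneg, le_div_iff₀ hden]
      nlinarith [hx.1, hx.2]
  have h0 : g 0 = 0 := by simp [hg]
  have := hmono (Set.mem_Ico.2 ⟨le_refl 0, one_pos⟩) (Set.mem_Ico.2 ⟨ht0, ht1⟩) ht0
  rw [h0] at this
  simp only [hg] at this
  linarith

lemma aux_log_ub {t : ℝ} (ht0 : 0 ≤ t) (ht1 : t < 1) :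
    Real.log (1 + t) - Real.log (1 - t) ≤ 2 * t / (1 - t^2) := by
  set g : ℝ → ℝ := fun t => 2 * t / (1 - t^2) - (Real.log (1 + t) - Real.log (1 - t)) with hg
  have hd : ∀ x ∈ Set.Ioo (0:ℝ) 1,
      HasDerivAt g ((2 + 2*x^2)/(1-x^2)^2 - (1/(1+x) + 1/(1-x))) x := by
    intro x hx
    have h1 : (1:ℝ) + x ≠ 0 := by nlinarith [hx.1, hx.2]
    have h2 : (1:ℝ) - x ≠ 0 := by nlinarith [hx.1, hx.2]
    have h3 : (1:ℝ) - x^2 ≠ 0 := by nlinarith [hx.1, hx.2]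
    have d1 : HasDerivAt (fun y : ℝ => Real.log (1 + y)) (1/(1+x)) x := by
      have := ((hasDerivAt_id x).const_add 1).log h1
      simpa [one_div] using this
    have d2 : HasDerivAt (fun y : ℝ => Real.log (1 - y)) (-(1/(1-x))) x := by
      have h := ((hasDerivAt_id x).const_sub 1).log h2
      refine h.congr_deriv ?_
      simp [neg_div]
    have dn : HasDerivAt (fun y : ℝ => 2 * y) 2 x := by
      simpa using (hasDerivAt_id x).const_mul 2
    have dd : HasDerivAt (fun y : ℝ => 1 - y^2) (-(2*x)) x := by
      have := (hasDerivAt_pow 2 x).const_sub 1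
      refine this.congr_deriv ?_
      ring
    have dq := dn.div dd h3
    have := dq.sub (d1.sub d2)
    refine this.congr_deriv ?_
    field_simp
    ring
  have hcont : ContinuousOn g (Set.Ico 0 1) := by
    apply ContinuousOn.sub
    · apply ContinuousOn.div (by fun_prop) (by fun_prop)
      intro x hx; simp only [Set.mem_Ico] at hx; nlinarith [hx.1, hx.2]
    · apply ContinuousOn.sub
      · apply ContinuousOn.log (by fun_prop)
        intro x hx; simp only [Set.mem_Ico] at hx; nlinarith [hx.1, hx.2]
      · apply ContinuousOn.log (by fun_prop)
        intro x hx; simp only [Set.mem_Ico] at hx; nlinarith [hx.1, hx.2]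
  have hmono : MonotoneOn g (Set.Ico 0 1) := by
    apply monotoneOn_of_deriv_nonneg (convex_Ico 0 1) hcont
    · intro x hx
      rw [interior_Ico] at hx
      exact ((hd x hx).differentiableAt).differentiableWithinAt
    · intro x hx
      rw [interior_Ico] at hx
      rw [(hd x hx).deriv]
      have h1 : (0:ℝ) < 1 + x := by linarith [hx.1]
      have h2 : (0:ℝ) < 1 - x := by linarith [hx.2]
      have h3 : (0:ℝ) < 1 - x^2 := by nlinarith [hx.1, hx.2]
      rw [sub_nonneg, div_add_div _ _ (ne_of_gt h1) (ne_of_gt h2),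
        div_le_div_iff₀ (by positivity) (by positivity)]
      nlinarith [hx.1, hx.2, sq_nonneg x]
  have h0 : g 0 = 0 := by simp [hg]
  have := hmono (Set.mem_Ico.2 ⟨le_refl 0, one_pos⟩) (Set.mem_Ico.2 ⟨ht0, ht1⟩) ht0
  rw [h0] at this
  simp only [hg] at this
  linarith

lemma phi_log_eq {q : ℝ} (hq0 : 0 < q) (hq1 : q < 1) :
    Real.log ((1 - q) / q) = Real.log (1 - q) - Real.log q :=
  Real.log_div (by linarith) (ne_of_gt hq0)

lemma phi_mul {q : ℝ} (hq0 : 0 < q) (hq1 : q < 1) :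
    pinskerPhi q * (1 - 2 * q) = Real.log (1 - q) - Real.log q := by
  unfold pinskerPhi
  by_cases h : q = 1/2
  · subst h; norm_num
  · rw [if_neg h, div_mul_cancel₀ _ (by intro hc; apply h; linarith), phi_log_eq hq0 hq1]

lemma phi_ge_two {q : ℝ} (hq0 : 0 < q) (hq2 : q ≤ 1/2) : 2 ≤ pinskerPhi q := by
  unfold pinskerPhi
  by_cases h : q = 1/2
  · rw [if_pos h]
  · rw [if_neg h]
    have hq2' : q < 1/2 := lt_of_le_of_ne hq2 h
    set t : ℝ := 1 - 2*q with ht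
    have ht0 : 0 < t := by simp only [ht]; linarith
    have ht1 : t < 1 := by simp only [ht]; linarith
    have hlog : Real.log ((1 - q)/q) = Real.log (1 + t) - Real.log (1 - t) := by
      rw [phi_log_eq hq0 (by linarith)]
      have e1 : (1:ℝ) + t = 2 * (1 - q) := by simp only [ht]; ring
      have e2 : (1:ℝ) - t = 2 * q := by simp only [ht]; ring
      rw [e1, e2, Real.log_mul (by norm_num) (by linarith), Real.log_mul (by norm_num) (ne_of_gt hq0)]
      ring
    rw [hlog, le_div_iff₀ ht0]
    have := aux_log_lb (le_of_lt ht0) ht1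
    linarith

lemma phi_bound {q : ℝ} (hq0 : 0 < q) (hq2 : q ≤ 1/2) :
    2 * pinskerPhi q * (q * (1 - q)) ≤ 1 := by
  unfold pinskerPhi
  by_cases h : q = 1/2
  · subst h; norm_num
  · rw [if_neg h]
    have hq2' : q < 1/2 := lt_of_le_of_ne hq2 h
    set t : ℝ := 1 - 2*q with ht
    have ht0 : 0 < t := by simp only [ht]; linarith
    have ht1 : t < 1 := by simp only [ht]; linarith
    have hlog : Real.log ((1 - q)/q) = Real.log (1 + t) - Real.log (1 - t) := by
      rw [phi_log_eq hq0 (by linarith)]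
      have e1 : (1:ℝ) + t = 2 * (1 - q) := by simp only [ht]; ring
      have e2 : (1:ℝ) - t = 2 * q := by simp only [ht]; ring
      rw [e1, e2, Real.log_mul (by norm_num) (by linarith), Real.log_mul (by norm_num) (ne_of_gt hq0)]
      ring
    have hub := aux_log_ub (le_of_lt ht0) ht1
    rw [hlog]
    have hq1 : q * (1 - q) = (1 - t^2)/4 := by simp only [ht]; ring
    have ht2 : (0:ℝ) < 1 - t^2 := by nlinarith
    rw [hq1]
    have key := (le_div_iff₀ ht2).1 hub
    have e3 : 2 * ((Real.log (1+t) - Real.log (1-t)) / t) * ((1 - t^2)/4)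
        = ((Real.log (1+t) - Real.log (1-t)) * (1 - t^2)) / (2*t) := by
      field_simp; ring
    rw [e3, div_le_one (by positivity)]
    linarith

lemma phi_symm {q : ℝ} (hq0 : 0 < q) (hq1 : q < 1) : pinskerPhi (1 - q) = pinskerPhi q := by
  unfold pinskerPhi
  by_cases h : q = 1/2
  · subst h; norm_num
  · have h' : (1:ℝ) - q ≠ 1/2 := by intro hc; apply h; linarith
    rw [if_neg h, if_neg h']
    have e1 : (1:ℝ) - (1 - q) = q := by ring
    rw [e1]
    have : q / (1 - q) = ((1-q)/q)⁻¹ := by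
      rw [inv_div]
    rw [this, Real.log_inv]
    have e2 : (1:ℝ) - 2*(1-q) = -(1 - 2*q) := by ring
    rw [e2, neg_div_neg_eq]

lemma klBin_self (q : ℝ) : klBin q q = 0 := by unfold klBin; ring

set_option maxHeartbeats 2000000 in
lemma klBin_ge_half {q : ℝ} (hq0 : 0 < q) (hq2 : q ≤ 1/2) {p : ℝ} (hp0 : 0 ≤ p) (hp1 : p ≤ 1) :
    pinskerPhi q * (p - q)^2 ≤ klBin p q := by
  have hq1 : q < 1 := by linarith
  set φ : ℝ := pinskerPhi q with hφdef
  have hφ2 : 2 ≤ φ := phi_ge_two hq0 hq2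
  have hφ0 : 0 < φ := by linarith
  set F : ℝ → ℝ := fun x => klBin x q - φ * (x - q)^2 with hF
  set h : ℝ → ℝ := fun x => (Real.log x - Real.log (1 - x))
      - (Real.log q - Real.log (1 - q)) - 2 * φ * (x - q) with hh
  -- derivative of F is h on (0,1)
  have hdF : ∀ x ∈ Set.Ioo (0:ℝ) 1, HasDerivAt F (h x) x := by
    intro x hx
    have hx0 : x ≠ 0 := ne_of_gt hx.1
    have hx1 : (1:ℝ) - x ≠ 0 := by have := hx.2; intro hc; linarith [hx.2]; 
    have d1 : HasDerivAt (fun y : ℝ => y * Real.log y) (Real.log x + 1) x :=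
      Real.hasDerivAt_mul_log hx0
    have d2 : HasDerivAt (fun y : ℝ => y * Real.log q) (Real.log q) x := by
      simpa using (hasDerivAt_id x).mul_const (Real.log q)
    have d3 : HasDerivAt (fun y : ℝ => (1 - y) * Real.log (1 - y))
        (-(Real.log (1 - x) + 1)) x := by
      have inner : HasDerivAt (fun y : ℝ => 1 - y) (-1) x := by
        simpa using (hasDerivAt_id x).const_sub 1
      have outer := Real.hasDerivAt_mul_log hx1
      have := outer.comp x inner
      refine this.congr_deriv ?_
      ring
    have d4 : HasDerivAt (fun y : ℝ => (1 - y) * Real.log (1 - q)) (-Real.log (1 - q)) x := by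
      have : HasDerivAt (fun y : ℝ => 1 - y) (-1) x := by
        simpa using (hasDerivAt_id x).const_sub 1
      have := this.mul_const (Real.log (1 - q))
      refine this.congr_deriv ?_; ring
    have d5 : HasDerivAt (fun y : ℝ => φ * (y - q)^2) (2 * φ * (x - q)) x := by
      have inner : HasDerivAt (fun y : ℝ => y - q) 1 x := by
        simpa using (hasDerivAt_id x).sub_const q
      have := ((inner.pow 2).const_mul φ)
      refine this.congr_deriv ?_
      ring
    have := ((((d1.sub d2).add d3).sub d4).sub d5)
    refine this.congr_deriv ?_
    simp only [hh]
    ring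
  -- derivative of h on (0,1)
  have hdh : ∀ x ∈ Set.Ioo (0:ℝ) 1, HasDerivAt h (1/x + 1/(1-x) - 2*φ) x := by
    intro x hx
    have hx0 : x ≠ 0 := ne_of_gt hx.1
    have hx1 : (1:ℝ) - x ≠ 0 := by intro hc; linarith [hx.2]
    have d1 : HasDerivAt (fun y : ℝ => Real.log y) (1/x) x := by
      simpa [one_div] using Real.hasDerivAt_log hx0
    have d2 : HasDerivAt (fun y : ℝ => Real.log (1 - y)) (-(1/(1-x))) x := by
      have hlog := (((hasDerivAt_id x).const_sub 1).log hx1)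
      refine hlog.congr_deriv ?_
      simp [neg_div]
    have d3 : HasDerivAt (fun y : ℝ => 2 * φ * (y - q)) (2*φ) x := by
      have : HasDerivAt (fun y : ℝ => y - q) 1 x := by
        simpa using (hasDerivAt_id x).sub_const q
      have := this.const_mul (2*φ)
      refine this.congr_deriv ?_; ring
    have := ((d1.sub d2).sub_const (Real.log q - Real.log (1 - q))).sub d3
    refine this.congr_deriv ?_
    ring
  -- continuity of F
  have hcF : Continuous F := by
    have c1 : Continuous fun x : ℝ => x * Real.log x := Real.continuous_mul_log
    have c2 : Continuous fun x : ℝ => (1 - x) * Real.log (1 - x) :=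
      Real.continuous_mul_log.comp (continuous_const.sub continuous_id)
    simp only [hF]
    unfold klBin
    fun_prop
  -- values of h
  have hhq : h q = 0 := by simp only [hh]; ring
  have hh1q : h (1 - q) = 0 := by
    have := phi_mul hq0 hq1
    simp only [hh, sub_sub_cancel]
    nlinarith [this]
  -- the roots r1 r2
  set s : ℝ := Real.sqrt (1 - 2/φ) with hs
  have hs0 : 0 ≤ s := Real.sqrt_nonneg _
  have hssq : s^2 = 1 - 2/φ := Real.sq_sqrt (by rw [sub_nonneg, div_le_one hφ0]; exact hφ2)
  have hs1 : s < 1 := by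
    nlinarith [hssq, div_pos (by norm_num : (0:ℝ) < 2) hφ0]
  set r1 : ℝ := (1 - s)/2 with hr1
  set r2 : ℝ := (1 + s)/2 with hr2
  have hr10 : 0 < r1 := by simp only [hr1]; linarith
  have hr12 : r1 ≤ 1/2 := by simp only [hr1]; linarith
  have hr22 : 1/2 ≤ r2 := by simp only [hr2]; linarith
  have hr21 : r2 < 1 := by simp only [hr2]; linarith
  have hr1r2 : r1 + r2 = 1 := by simp only [hr1, hr2]; ring
  have hrprod : r1 * (1 - r1) = 1/(2*φ) := by
    have : r1 * (1 - r1) = (1 - s^2)/4 := by simp only [hr1]; ring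
    rw [this, hssq]
    field_simp
    ring
  -- q ≤ r1
  have hqr1 : q ≤ r1 := by
    by_contra hcon
    push_neg at hcon
    have hb := phi_bound hq0 hq2
    have h1 : q * (1 - q) ≤ r1 * (1 - r1) := by
      rw [hrprod]
      rw [le_div_iff₀ (by positivity)]
      nlinarith [hb]
    have h2 : 0 < 1 - q - r1 := by linarith
    nlinarith [mul_pos (sub_pos.2 hcon) h2]
  have hqr2 : r2 ≤ 1 - q := by linarith
  -- sign of h' : nonneg on (0,r1] and [r2,1), nonpos on [r1,r2]
  have hsign_pos : ∀ x ∈ Set.Ioo (0:ℝ) 1, (x ≤ r1 ∨ r2 ≤ x) → 0 ≤ 1/x + 1/(1-x) - 2*φ := by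
    intro x hx hcase
    have hx0 : 0 < x := hx.1
    have hx1 : 0 < 1 - x := by linarith [hx.2]
    have hxle : x * (1 - x) ≤ 1/(2*φ) := by
      rw [← hrprod]
      rcases hcase with hc | hc
      · nlinarith
      · nlinarith
    rw [sub_nonneg, div_add_div _ _ (ne_of_gt hx0) (ne_of_gt hx1), le_div_iff₀ (by positivity)]
    have : 2 * φ * (x * (1-x)) ≤ 1 := by
      rw [le_div_iff₀ (by positivity)] at hxle
      linarith
    linarith [this]
  have hsign_neg : ∀ x ∈ Set.Ioo (0:ℝ) 1, r1 ≤ x → x ≤ r2 → 1/x + 1/(1-x) - 2*φ ≤ 0 := by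
    intro x hx hc1 hc2
    have hx0 : 0 < x := hx.1
    have hx1 : 0 < 1 - x := by linarith [hx.2]
    have hxge : 1/(2*φ) ≤ x * (1 - x) := by
      rw [← hrprod]
      nlinarith
    rw [sub_nonpos, div_add_div _ _ (ne_of_gt hx0) (ne_of_gt hx1), div_le_iff₀ (by positivity)]
    have : 1 ≤ 2 * φ * (x * (1-x)) := by
      rw [div_le_iff₀ (by positivity)] at hxge
      linarith
    linarith [this]
  -- h monotone on Ioc 0 r1, antitone on Icc r1 r2, monotone on Ico r2 1
  have hcont_h : ContinuousOn h (Set.Ioo 0 1) := by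
    simp only [hh]
    apply ContinuousOn.sub (ContinuousOn.sub ?_ continuousOn_const) (by fun_prop)
    apply ContinuousOn.sub
    · exact Real.continuousOn_log.mono (by intro x hx; simp; exact ne_of_gt hx.1)
    · apply ContinuousOn.log (by fun_prop)
      intro x hx; intro hc; simp only [Set.mem_Ioo] at hx; linarith [hx.2]
  have hmono1 : MonotoneOn h (Set.Ioc 0 r1) := by
    apply monotoneOn_of_deriv_nonneg (convex_Ioc 0 r1)
      (hcont_h.mono (by intro x hx; exact ⟨hx.1, lt_of_le_of_lt hx.2 (by linarith)⟩))
    · intro x hx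
      rw [interior_Ioc] at hx
      exact ((hdh x ⟨hx.1, by linarith [hx.2]⟩).differentiableAt).differentiableWithinAt
    · intro x hx
      rw [interior_Ioc] at hx
      have hx' : x ∈ Set.Ioo (0:ℝ) 1 := ⟨hx.1, by linarith [hx.2]⟩
      rw [(hdh x hx').deriv]
      exact hsign_pos x hx' (Or.inl (le_of_lt hx.2))
  have hanti : AntitoneOn h (Set.Icc r1 r2) := by
    apply antitoneOn_of_deriv_nonpos (convex_Icc r1 r2)
      (hcont_h.mono (by intro x hx; exact ⟨lt_of_lt_of_le hr10 hx.1, lt_of_le_of_lt hx.2 hr21⟩))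
    · intro x hx
      rw [interior_Icc] at hx
      have hx' : x ∈ Set.Ioo (0:ℝ) 1 := ⟨lt_trans hr10 hx.1, lt_trans hx.2 hr21⟩
      exact ((hdh x hx').differentiableAt).differentiableWithinAt
    · intro x hx
      rw [interior_Icc] at hx
      have hx' : x ∈ Set.Ioo (0:ℝ) 1 := ⟨lt_trans hr10 hx.1, lt_trans hx.2 hr21⟩
      rw [(hdh x hx').deriv]
      exact hsign_neg x hx' (le_of_lt hx.1) (le_of_lt hx.2)
  have hmono2 : MonotoneOn h (Set.Ico r2 1) := by
    apply monotoneOn_of_deriv_nonneg (convex_Ico r2 1)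
      (hcont_h.mono (by intro x hx; exact ⟨lt_of_lt_of_le (lt_of_lt_of_le hr10 (by linarith)) hx.1, hx.2⟩))
    · intro x hx
      rw [interior_Ico] at hx
      have hx' : x ∈ Set.Ioo (0:ℝ) 1 := ⟨by linarith [hx.1, hr10], hx.2⟩
      exact ((hdh x hx').differentiableAt).differentiableWithinAt
    · intro x hx
      rw [interior_Ico] at hx
      have hx' : x ∈ Set.Ioo (0:ℝ) 1 := ⟨by linarith [hx.1, hr10], hx.2⟩
      rw [(hdh x hx').deriv]
      exact hsign_pos x hx' (Or.inr (le_of_lt hx.1))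
  -- values of F
  have hFq : F q = 0 := by simp only [hF, klBin_self]; ring
  have hF1q : F (1 - q) = 0 := by
    have hm := phi_mul hq0 hq1
    simp only [hF]
    unfold klBin
    simp only [sub_sub_cancel]
    nlinarith [hm]
  -- generic monotonicity tool for F
  have Fmono : ∀ a b : ℝ, 0 ≤ a → b ≤ 1 → a ≤ b → (∀ x ∈ Set.Ioo a b, 0 ≤ h x) →
      F a ≤ F b := by
    intro a b ha hb hab hsgn
    have : MonotoneOn F (Set.Icc a b) := by
      apply monotoneOn_of_deriv_nonneg (convex_Icc a b) hcF.continuousOn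
      · intro x hx
        rw [interior_Icc] at hx
        have hx' : x ∈ Set.Ioo (0:ℝ) 1 := ⟨by linarith [hx.1], by linarith [hx.2]⟩
        exact ((hdF x hx').differentiableAt).differentiableWithinAt
      · intro x hx
        rw [interior_Icc] at hx
        have hx' : x ∈ Set.Ioo (0:ℝ) 1 := ⟨by linarith [hx.1], by linarith [hx.2]⟩
        rw [(hdF x hx').deriv]
        exact hsgn x hx
    exact this (Set.mem_Icc.2 ⟨le_refl a, hab⟩) (Set.mem_Icc.2 ⟨hab, le_refl b⟩) hab
  have Fanti : ∀ a b : ℝ, 0 ≤ a → b ≤ 1 → a ≤ b → (∀ x ∈ Set.Ioo a b, h x ≤ 0) →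
      F b ≤ F a := by
    intro a b ha hb hab hsgn
    have : AntitoneOn F (Set.Icc a b) := by
      apply antitoneOn_of_deriv_nonpos (convex_Icc a b) hcF.continuousOn
      · intro x hx
        rw [interior_Icc] at hx
        have hx' : x ∈ Set.Ioo (0:ℝ) 1 := ⟨by linarith [hx.1], by linarith [hx.2]⟩
        exact ((hdF x hx').differentiableAt).differentiableWithinAt
      · intro x hx
        rw [interior_Icc] at hx
        have hx' : x ∈ Set.Ioo (0:ℝ) 1 := ⟨by linarith [hx.1], by linarith [hx.2]⟩
        rw [(hdF x hx').deriv]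
        exact hsgn x hx
    exact this (Set.mem_Icc.2 ⟨le_refl a, hab⟩) (Set.mem_Icc.2 ⟨hab, le_refl b⟩) hab
  -- main case analysis; goal : 0 ≤ F p
  have main : 0 ≤ F p := by
    rcases le_or_gt p q with hc1 | hc1
    · -- p ≤ q : h ≤ 0 on (p,q)
      have := Fanti p q hp0 (by linarith) hc1 (fun x hx => by
        have hxm : x ∈ Set.Ioc (0:ℝ) r1 := ⟨by linarith [hx.1], by linarith [hx.2]⟩
        have := hmono1 hxm (Set.mem_Ioc.2 ⟨hq0, hqr1⟩) (le_of_lt hx.2)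
        rw [hhq] at this
        exact this)
      linarith [hFq, this]
    rcases le_or_gt p r1 with hc2 | hc2
    · -- q < p ≤ r1 : h ≥ 0 on (q,p)
      have := Fmono q p (le_of_lt hq0) (by linarith) (le_of_lt hc1) (fun x hx => by
        have hxm : x ∈ Set.Ioc (0:ℝ) r1 := ⟨by linarith [hx.1, hq0], by linarith [hx.2]⟩
        have := hmono1 (Set.mem_Ioc.2 ⟨hq0, hqr1⟩) hxm (le_of_lt hx.1)
        rw [hhq] at this
        exact this)
      linarith [hFq, this]
    rcases le_or_gt p r2 with hc3 | hc3
    · -- r1 < p ≤ r2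
      rcases le_or_gt 0 (h p) with hc4 | hc4
      · -- h p ≥ 0 : h ≥ 0 on (q,p)
        have := Fmono q p (le_of_lt hq0) (by linarith [hr21]) (by linarith) (fun x hx => by
          rcases le_or_gt x r1 with hc5 | hc5
          · have hxm : x ∈ Set.Ioc (0:ℝ) r1 := ⟨by linarith [hx.1, hq0], hc5⟩
            have := hmono1 (Set.mem_Ioc.2 ⟨hq0, hqr1⟩) hxm (le_of_lt hx.1)
            rw [hhq] at this
            exact this
          · have := hanti (Set.mem_Icc.2 ⟨le_of_lt hc5, by linarith [hx.2]⟩)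
              (Set.mem_Icc.2 ⟨le_of_lt hc2, hc3⟩) (le_of_lt hx.2)
            linarith [hc4, this])
        linarith [hFq, this]
      · -- h p < 0 : h ≤ 0 on (p, 1-q)
        have := Fanti p (1 - q) (by linarith [hr10]) (by linarith) (by linarith) (fun x hx => by
          rcases le_or_gt x r2 with hc5 | hc5
          · have := hanti (Set.mem_Icc.2 ⟨le_of_lt hc2, hc3⟩)
              (Set.mem_Icc.2 ⟨by linarith [hx.1], hc5⟩) (le_of_lt hx.1)
            linarith [hc4, this]
          · have hxx : x ∈ Set.Ico r2 (1:ℝ) := ⟨le_of_lt hc5, by linarith [hx.2, hq0]⟩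
            have h1q : (1 - q) ∈ Set.Ico r2 (1:ℝ) := ⟨hqr2, by linarith⟩
            have := hmono2 hxx h1q (le_of_lt hx.2)
            rw [hh1q] at this
            exact this)
        linarith [hF1q, this]
    rcases le_or_gt p (1 - q) with hc4 | hc4
    · -- r2 < p ≤ 1-q : h ≤ 0 on (p, 1-q)
      have := Fanti p (1 - q) (by linarith [hr10, hr22]) (by linarith) hc4 (fun x hx => by
        have hxx : x ∈ Set.Ico r2 (1:ℝ) := ⟨by linarith [hx.1], by linarith [hx.2, hq0]⟩
        have h1q : (1 - q) ∈ Set.Ico r2 (1:ℝ) := ⟨hqr2, by linarith⟩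
        have := hmono2 hxx h1q (le_of_lt hx.2)
        rw [hh1q] at this
        exact this)
      linarith [hF1q, this]
    · -- 1-q < p : h ≥ 0 on (1-q, p)
      have := Fmono (1 - q) p (by linarith) hp1 (le_of_lt hc4) (fun x hx => by
        have hxx : x ∈ Set.Ico r2 (1:ℝ) := ⟨by linarith [hx.1], by linarith [hx.2]⟩
        have h1q : (1 - q) ∈ Set.Ico r2 (1:ℝ) := ⟨hqr2, by linarith⟩
        have := hmono2 h1q hxx (le_of_lt hx.1)
        rw [hh1q] at this
        exact this)
      linarith [hF1q, this]
  simp only [hF] at main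
  linarith

lemma klBin_symm (p q : ℝ) : klBin (1 - p) (1 - q) = klBin p q := by
  unfold klBin
  simp only [sub_sub_cancel]
  ring

lemma klBin_ge {q : ℝ} (hq0 : 0 < q) (hq1 : q < 1) {p : ℝ} (hp0 : 0 ≤ p) (hp1 : p ≤ 1) :
    pinskerPhi q * (p - q)^2 ≤ klBin p q := by
  rcases le_or_gt q (1/2) with hc | hc
  · exact klBin_ge_half hq0 hc hp0 hp1
  · have h1 := klBin_ge_half (q := 1 - q) (by linarith) (by linarith)
      (p := 1 - p) (by linarith) (by linarith)
    rw [klBin_symm, phi_symm hq0 hq1] at h1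
    have : (1 - p - (1 - q))^2 = (p - q)^2 := by ring
    rw [this] at h1
    exact h1

lemma phi_pos {q : ℝ} (hq0 : 0 < q) (hq1 : q < 1) : 0 < pinskerPhi q := by
  rcases le_or_gt q (1/2) with hc | hc
  · linarith [phi_ge_two hq0 hc]
  · rw [← phi_symm hq0 hq1]
    linarith [phi_ge_two (q := 1 - q) (by linarith) (by linarith)]

lemma mul_log_div_eq (p q : ℝ) (hq : q ≠ 0) :
    p * Real.log (p/q) = p * Real.log p - p * Real.log q := by
  rcases eq_or_ne p 0 with h | h
  · simp [h]
  · rw [Real.log_div h hq]; ring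

lemma integral_log_rnDeriv_ge {Ω : Type*} [MeasurableSpace Ω]
    (P Q : Measure Ω) [IsProbabilityMeasure P] [IsProbabilityMeasure Q]
    (hac : P ≪ Q) (hint : Integrable (fun ω => Real.log (P.rnDeriv Q ω).toReal) P)
    (A : Set Ω) (hA : MeasurableSet A)
    (hq0 : 0 < (Q A).toReal) (hq1 : (Q A).toReal < 1) :
    klBin (P A).toReal (Q A).toReal ≤ ∫ ω, Real.log (P.rnDeriv Q ω).toReal ∂P := by
  set p : ℝ := (P A).toReal with hp
  set q : ℝ := (Q A).toReal with hq
  have hp0 : 0 ≤ p := ENNReal.toReal_nonneg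
  have hp1 : p ≤ 1 := by
    have := ENNReal.toReal_mono (by simp : (1:ℝ≥0∞) ≠ ⊤) (prob_le_one (μ := P) (s := A))
    simpa using this
  have hq1' : (0:ℝ) < 1 - q := by linarith
  set f : Ω → ℝ := fun ω => (P.rnDeriv Q ω).toReal with hf
  have hfmeas : Measurable f := (Measure.measurable_rnDeriv P Q).ennreal_toReal
  set c : Ω → ℝ := fun ω => if ω ∈ A then p/q else (1-p)/(1-q) with hc
  have hcmeas : Measurable c := Measurable.ite hA measurable_const measurable_const
  have hcnn : ∀ ω, 0 ≤ c ω := by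
    intro ω
    simp only [hc]
    split
    · positivity
    · have : (0:ℝ) ≤ 1 - p := by linarith
      positivity
  -- a.e. facts
  have hfpos : ∀ᵐ ω ∂P, 0 < P.rnDeriv Q ω := Measure.rnDeriv_pos hac
  have hffin : ∀ᵐ ω ∂P, P.rnDeriv Q ω < ⊤ := hac.ae_le (Measure.rnDeriv_lt_top P Q)
  have hpcompl : (P Aᶜ).toReal = 1 - p := by
    rw [prob_compl_eq_one_sub hA, ENNReal.toReal_sub_of_le prob_le_one (by simp)]
    simp [hp]
  have hcpos : ∀ᵐ ω ∂P, 0 < c ω := by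
    by_cases h0 : P A = 0
    · have hmem : ∀ᵐ ω ∂P, ω ∉ A := (MeasureTheory.measure_eq_zero_iff_ae_notMem).1 h0
      have hp00 : p = 0 := by simp [hp, h0]
      filter_upwards [hmem] with ω hω
      simp only [hc, if_neg hω, hp00]
      exact div_pos (by norm_num) hq1'
    by_cases h1 : P Aᶜ = 0
    · have hmem : ∀ᵐ ω ∂P, ω ∉ Aᶜ := (MeasureTheory.measure_eq_zero_iff_ae_notMem).1 h1
      have hppos : 0 < p := ENNReal.toReal_pos h0 (measure_ne_top P A)
      filter_upwards [hmem] with ω hω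
      have hωA : ω ∈ A := by simpa using hω
      simp only [hc, if_pos hωA]
      positivity
    · have hppos : 0 < p := ENNReal.toReal_pos h0 (measure_ne_top P A)
      have hp1' : p < 1 := by
        have := ENNReal.toReal_pos h1 (measure_ne_top P Aᶜ)
        rw [hpcompl] at this
        linarith
      refine Filter.Eventually.of_forall (fun ω => ?_)
      simp only [hc]
      split
      · positivity
      · have : (0:ℝ) < 1 - p := by linarith
        positivity
  -- pointwise inequality
  have hptwise : ∀ᵐ ω ∂P,
      Real.log (c ω) + 1 - c ω / f ω ≤ Real.log (f ω) := by
    filter_upwards [hfpos, hffin, hcpos] with ω h1 h2 h3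
    have hfp : 0 < f ω := ENNReal.toReal_pos (ne_of_gt h1) (ne_of_lt h2)
    have hdiv : 0 < c ω / f ω := div_pos h3 hfp
    have := Real.log_le_sub_one_of_pos hdiv
    rw [Real.log_div (ne_of_gt h3) (ne_of_gt hfp)] at this
    linarith
  -- integrability of log c
  set L1 : ℝ := Real.log (p/q) with hL1
  set L2 : ℝ := Real.log ((1-p)/(1-q)) with hL2
  have hlogc : (fun ω => Real.log (c ω))
      = fun ω => A.indicator (fun _ => L1 - L2) ω + L2 := by
    funext ω
    simp only [hc]
    by_cases hω : ω ∈ A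
    · simp [hω, hL1]
    · simp [hω, hL2]
  have hint1 : Integrable (fun ω => Real.log (c ω)) P := by
    rw [hlogc]
    exact ((integrable_const (L1 - L2)).indicator hA).add (integrable_const L2)
  have hint1val : ∫ ω, Real.log (c ω) ∂P = p * L1 + (1-p) * L2 := by
    rw [hlogc, integral_add ((integrable_const (L1 - L2)).indicator hA) (integrable_const L2),
      integral_indicator_const _ hA, integral_const]
    simp only [measureReal_def, smul_eq_mul, measure_univ, ENNReal.toReal_one, one_mul, ← hp]
    ring
  -- integrability and bound for c/f
  have hkey : ∀ᵐ ω ∂P, ENNReal.ofReal (c ω / f ω)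
      = ENNReal.ofReal (c ω) / P.rnDeriv Q ω := by
    filter_upwards [hfpos, hffin] with ω h1 h2
    have hfp : 0 < f ω := ENNReal.toReal_pos (ne_of_gt h1) (ne_of_lt h2)
    rw [ENNReal.ofReal_div_of_pos hfp]
    congr 1
    exact ENNReal.ofReal_toReal (ne_of_lt h2)
  have hcof : AEMeasurable (fun ω => ENNReal.ofReal (c ω) / P.rnDeriv Q ω) Q :=
    (hcmeas.ennreal_ofReal.div (Measure.measurable_rnDeriv P Q)).aemeasurable
  have hlint_c : ∫⁻ ω, ENNReal.ofReal (c ω) ∂Q = 1 := by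
    have hrw : (fun ω => ENNReal.ofReal (c ω))
        = fun ω => A.indicator (fun _ => ENNReal.ofReal (p/q)) ω
            + Aᶜ.indicator (fun _ => ENNReal.ofReal ((1-p)/(1-q))) ω := by
      funext ω
      by_cases hω : ω ∈ A
      · simp [hc, hω]
      · simp [hc, hω]
    rw [hrw, lintegral_add_left ((measurable_const).indicator hA)]
    rw [lintegral_indicator_const hA, lintegral_indicator_const hA.compl]
    have hQA : Q A = ENNReal.ofReal q := (ENNReal.ofReal_toReal (measure_ne_top Q A)).symm
    have hQAc : Q Aᶜ = ENNReal.ofReal (1 - q) := by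
      rw [prob_compl_eq_one_sub hA, hQA, ← ENNReal.ofReal_one,
        ← ENNReal.ofReal_sub _ (le_of_lt hq0)]
    rw [hQA, hQAc, ← ENNReal.ofReal_mul (by positivity),
      ← ENNReal.ofReal_mul (div_nonneg (by linarith) (le_of_lt hq1'))]
    rw [div_mul_cancel₀ _ (ne_of_gt hq0), div_mul_cancel₀ _ (ne_of_gt hq1')]
    rw [← ENNReal.ofReal_add hp0 (by linarith)]
    norm_num
  have hlint_bound : ∫⁻ ω, ENNReal.ofReal (c ω / f ω) ∂P ≤ 1 := by
    rw [lintegral_congr_ae hkey]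
    rw [← MeasureTheory.lintegral_rnDeriv_mul hac hcof]
    calc ∫⁻ ω, P.rnDeriv Q ω * (ENNReal.ofReal (c ω) / P.rnDeriv Q ω) ∂Q
        ≤ ∫⁻ ω, ENNReal.ofReal (c ω) ∂Q := lintegral_mono (fun ω => ENNReal.mul_div_le)
      _ = 1 := hlint_c
  have hint2 : Integrable (fun ω => c ω / f ω) P := by
    constructor
    · exact (hcmeas.div hfmeas).aestronglyMeasurable
    · rw [hasFiniteIntegral_iff_ofReal (Filter.Eventually.of_forall
        (fun ω => div_nonneg (hcnn ω) ENNReal.toReal_nonneg))]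
      exact lt_of_le_of_lt hlint_bound (by norm_num)
  have hint2val : ∫ ω, c ω / f ω ∂P ≤ 1 := by
    rw [integral_eq_lintegral_of_nonneg_ae (Filter.Eventually.of_forall
        (fun ω => div_nonneg (hcnn ω) ENNReal.toReal_nonneg))
        (hcmeas.div hfmeas).aestronglyMeasurable]
    calc (∫⁻ ω, ENNReal.ofReal (c ω / f ω) ∂P).toReal
        ≤ (1 : ℝ≥0∞).toReal := ENNReal.toReal_mono (by norm_num) hlint_bound
      _ = 1 := by norm_num
  -- combine
  have hLHSint : Integrable (fun ω => Real.log (c ω) + 1 - c ω / f ω) P :=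
    (hint1.add (integrable_const 1)).sub hint2
  have hint1' : Integrable (fun ω => Real.log (c ω) + 1) P := hint1.add (integrable_const 1)
  have hmain := integral_mono_ae hLHSint hint hptwise
  rw [integral_sub hint1' hint2,
    integral_add hint1 (integrable_const 1), integral_const, hint1val] at hmain
  simp only [measureReal_def, measure_univ, ENNReal.toReal_one, smul_eq_mul, one_mul, mul_one] at hmain
  have hklrw : klBin p q = p * L1 + (1-p) * L2 := by
    unfold klBin
    rw [hL1, hL2, mul_log_div_eq p q (ne_of_gt hq0),
      mul_log_div_eq (1-p) (1-q) (ne_of_gt hq1')]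
    ring
  rw [hklrw]
  linarith [hint2val, hmain]

/-- Refined Pinsker's inequality for general distributions:
`|P(A) − Q(A)| ≤ sqrt(KL(P,Q)/φ(Q(A)))` for every event `A` with `Q(A) ∈ (0,1)`. -/
theorem refined_pinsker {Ω : Type*} [MeasurableSpace Ω]
    (P Q : Measure Ω) [IsProbabilityMeasure P] [IsProbabilityMeasure Q]
    (hKL : KLdiv P Q ≠ ⊤)
    (A : Set Ω) (hA : MeasurableSet A) (hQA : (Q A).toReal ∈ Set.Ioo (0 : ℝ) 1) :
    |(P A).toReal - (Q A).toReal| ≤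
      Real.sqrt ((KLdiv P Q).toReal / pinskerPhi ((Q A).toReal)) := by
  by_cases hcond : P ≪ Q ∧ Integrable (fun ω => Real.log (P.rnDeriv Q ω).toReal) P
  · obtain ⟨hac, hint⟩ := hcond
    have hKLeq : KLdiv P Q = ENNReal.ofReal (∫ ω, Real.log (P.rnDeriv Q ω).toReal ∂P) := by
      unfold KLdiv
      rw [if_pos ⟨hac, hint⟩]
    set I : ℝ := ∫ ω, Real.log (P.rnDeriv Q ω).toReal ∂P with hI
    set p : ℝ := (P A).toReal with hp
    set q : ℝ := (Q A).toReal with hq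
    have hq0 : 0 < q := hQA.1
    have hq1 : q < 1 := hQA.2
    have hφ : 0 < pinskerPhi q := phi_pos hq0 hq1
    have hp1 : p ≤ 1 := by
      have := ENNReal.toReal_mono (by simp : (1:ℝ≥0∞) ≠ ⊤) (prob_le_one (μ := P) (s := A))
      simpa using this
    have h1 := integral_log_rnDeriv_ge P Q hac hint A hA hq0 hq1
    have h2 := klBin_ge hq0 hq1 (p := p) ENNReal.toReal_nonneg hp1
    have h3 : I ≤ (KLdiv P Q).toReal := by
      rw [hKLeq, ENNReal.toReal_ofReal']
      exact le_max_left _ _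
    have key : pinskerPhi q * (p - q)^2 ≤ (KLdiv P Q).toReal :=
      le_trans h2 (le_trans h1 h3)
    have hdiv : (p - q)^2 ≤ (KLdiv P Q).toReal / pinskerPhi q := by
      rw [le_div_iff₀ hφ]
      linarith [key]
    calc |p - q| = Real.sqrt ((p - q)^2) := (Real.sqrt_sq_eq_abs _).symm
      _ ≤ Real.sqrt ((KLdiv P Q).toReal / pinskerPhi q) := Real.sqrt_le_sqrt hdiv
  · exfalso
    apply hKL
    unfold KLdiv
    rw [if_neg hcond]
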